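/- Let k ≥ 0 be an integer and let n be an integer with 3·2^k ≤ n ≤ 3·2^{k+1}. Then every triangulation T of the n-gon satisfies TCL(T) ≥ n(k+2) − 3·2^{k+1}. -/

import Mathlib

open scoped Classical

/-- The cyclic distance between two vertices of the `n`-gon labeled by `ZMod n`:
`min (k, n - k)` where `k` is the representative of `b - a`. -/
def cycDist {n : ℕ} (a b : ZMod n) : ℕ := min (b - a).val (a - b).val

/-- The length of an unordered pair of vertices (in particular, of a chord). -/
def chordLen {n : ℕ} (p : Sym2 (ZMod n)) : ℕ :=
  Sym2.lift ⟨fun a b => cycDist a b, fun _ _ => min_comm _ _⟩ p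

/-- `x` lies strictly inside the clockwise arc from `a` to `b`. -/
def InArc {n : ℕ} (a b x : ZMod n) : Prop :=
  0 < (x - a).val ∧ (x - a).val < (b - a).val

/-- Two chords cross: their four endpoints are distinct and exactly one endpoint of the
second chord lies strictly inside the clockwise arc from `a` to `b`. -/
def Crosses {n : ℕ} (p q : Sym2 (ZMod n)) : Prop :=
  ∃ a b c d : ZMod n, p = s(a, b) ∧ q = s(c, d) ∧
    a ≠ b ∧ a ≠ c ∧ a ≠ d ∧ b ≠ c ∧ b ≠ d ∧ c ≠ d ∧
    Xor' (InArc a b c) (InArc a b d)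

/-- A triangulation of the `n`-gon: a set of `n - 3` pairwise non-crossing chords
(each chord having length at least 2). -/
def IsTriangulation (n : ℕ) (T : Finset (Sym2 (ZMod n))) : Prop :=
  T.card = n - 3 ∧ (∀ p ∈ T, 2 ≤ chordLen p) ∧
    ∀ p ∈ T, ∀ q ∈ T, p ≠ q → ¬ Crosses p q

/-- The total chord length of a triangulation. -/
def TCL (n : ℕ) (T : Finset (Sym2 (ZMod n))) : ℕ := ∑ p ∈ T, chordLen p

/-- A diameter is a chord of length `n / 2` (only possible for `n` even). -/
def IsDiameter {n : ℕ} (p : Sym2 (ZMod n)) : Prop := 2 * chordLen p = n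

/-- The chord `p` layers the boundary edge `{i, i + 1}`: the edge lies on the (strictly)
shorter of the two arcs between the endpoints of `p`.  (Diameters never layer an edge.) -/
def LayersEdge {n : ℕ} (p : Sym2 (ZMod n)) (i : ZMod n) : Prop :=
  ∃ a b : ZMod n, p = s(a, b) ∧ (b - a).val < (a - b).val ∧ (i - a).val < (b - a).val

/-- The doubled layer number of the boundary edge `{i, i + 1}`:
twice the number of non-diameter chords layering it, plus the number of diameters. -/
noncomputable def mT (n : ℕ) (T : Finset (Sym2 (ZMod n))) (i : ZMod n) : ℕ :=
  2 * (T.filter (fun p => LayersEdge p i ∧ ¬ IsDiameter p)).card +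
    (T.filter (fun p => IsDiameter p)).card

/-- Subdivision of a triangulation of the `n`-gon at the boundary edge `{n-1, 0}`:
re-embed all chords (via representatives in `{0, …, n-1}`) into the `(n+1)`-gon, whose new
vertex `n` lies between `n - 1` and `0`, and add the chord `{n - 1, 0}`. -/
def subdiv (n : ℕ) (T : Finset (Sym2 (ZMod n))) : Finset (Sym2 (ZMod (n + 1))) :=
  T.image (Sym2.map (fun a : ZMod n => ((a.val : ℕ) : ZMod (n + 1)))) ∪
    {s(((n - 1 : ℕ) : ZMod (n + 1)), (0 : ZMod (n + 1)))}

/-- Doubling construction: subdivide every boundary edge of the `m`-gon (old vertex `a`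
becomes `2a` in the `2m`-gon) and add the chord `{2a, 2a+2}` over each new vertex. -/
def doubleTri (m : ℕ) (T : Finset (Sym2 (ZMod m))) : Finset (Sym2 (ZMod (2 * m))) :=
  T.image (Sym2.map (fun a : ZMod m => ((2 * a.val : ℕ) : ZMod (2 * m)))) ∪
    (Finset.range m).image
      (fun a : ℕ => s(((2 * a : ℕ) : ZMod (2 * m)), ((2 * a + 2 : ℕ) : ZMod (2 * m))))

set_option linter.unusedSectionVars false

section Helpers
variable {n : ℕ} [NeZero n]

lemma val_sub' (u w : ZMod n) : (u - w).val = (u.val + n - w.val) % n := by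
  rcases eq_or_ne w 0 with rfl | hw
  · simp [Nat.add_sub_cancel, Nat.add_mod_right, ZMod.val_lt u, Nat.mod_eq_of_lt]
  · rw [sub_eq_add_neg, ZMod.val_add, ZMod.neg_val, if_neg hw]
    have : u.val + (n - w.val) = u.val + n - w.val := by
      have := ZMod.val_lt w; omega
    rw [this]

lemma val_add_val (u : ZMod n) (t : ℕ) (ht : t < n) : (u + (t : ZMod n)).val = (u.val + t) % n := by
  rw [ZMod.val_add, ZMod.val_natCast, Nat.mod_eq_of_lt ht]

lemma sum_val_sub {u w : ZMod n} (h : u ≠ w) : (u - w).val + (w - u).val = n := by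
  have h1 : u - w ≠ 0 := sub_ne_zero_of_ne h
  have : w - u = -(u - w) := by ring
  rw [this, ZMod.neg_val, if_neg h1]
  have := ZMod.val_lt (u - w); omega

lemma eq_of_val_sub_eq {a u w : ZMod n} (h : (u - a).val = (w - a).val) : u = w := by
  have : u - a = w - a := ZMod.val_injective n h
  linear_combination this

end Helpers

section Chord
variable {n : ℕ} [NeZero n]

lemma chordLen_mk (a b : ZMod n) : chordLen s(a,b) = min (b-a).val (a-b).val := rfl

/-- Canonical orientation of a non-diameter chord of length ≥ 2. -/
lemma chord_canon {q : Sym2 (ZMod n)} (h2 : 2 ≤ chordLen q) (hd : ¬ IsDiameter q) :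
    ∃ a b : ZMod n, q = s(a,b) ∧ (b - a).val = chordLen q ∧ (b-a).val < (a-b).val ∧
      (b-a).val + (a-b).val = n := by
  induction q using Sym2.inductionOn with
  | hf x y =>
    have hxy : x ≠ y := by
      rintro rfl; rw [chordLen_mk] at h2; simp at h2
    have hsum : (y - x).val + (x - y).val = n := sum_val_sub (Ne.symm hxy)
    have hne : (y-x).val ≠ (x-y).val := by
      intro he
      apply hd
      show 2 * chordLen s(x,y) = n
      rw [chordLen_mk]
      omega
    rcases lt_or_gt_of_ne hne with h | h
    · exact ⟨x, y, rfl, by rw [chordLen_mk]; omega, h, hsum⟩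
    · refine ⟨y, x, Sym2.eq_swap, ?_, h, by omega⟩
      rw [chordLen_mk]; omega

/-- The set of edges layered by a chord. -/
noncomputable def arcS {n : ℕ} [NeZero n] (q : Sym2 (ZMod n)) : Finset (ZMod n) :=
  Finset.univ.filter (fun i => LayersEdge q i)

lemma layers_iff {a b : ZMod n} (hab : (b-a).val < (a-b).val) (i : ZMod n) :
    LayersEdge s(a,b) i ↔ (i - a).val < (b - a).val := by
  constructor
  · rintro ⟨a', b', he, h1, h2⟩
    rw [Sym2.eq_iff] at he
    rcases he with ⟨rfl, rfl⟩ | ⟨rfl, rfl⟩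
    · exact h2
    · omega
  · intro h; exact ⟨a, b, rfl, hab, h⟩

lemma mem_arcS_iff {a b : ZMod n} (hab : (b-a).val < (a-b).val) (i : ZMod n) :
    i ∈ arcS s(a,b) ↔ (i - a).val < (b - a).val := by
  rw [arcS, Finset.mem_filter]; simp [layers_iff hab]

lemma card_arcS {a b : ZMod n} (hab : (b-a).val < (a-b).val) :
    (arcS s(a,b)).card = (b-a).val := by
  have hbn : (b-a).val < n := lt_of_lt_of_le hab (le_of_lt (ZMod.val_lt _))
  rw [← Finset.card_range (b-a).val]
  apply Finset.card_nbij' (fun i => (i - a).val) (fun t => a + ((t : ℕ) : ZMod n))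
  · intro i hi
    rw [Finset.mem_coe, mem_arcS_iff hab] at hi
    exact Finset.mem_range.2 hi
  · intro t ht
    rw [Finset.mem_coe, Finset.mem_range] at ht
    beta_reduce
    rw [Finset.mem_coe, mem_arcS_iff hab]
    have : (a + ((t:ℕ):ZMod n) - a) = ((t:ℕ) : ZMod n) := by ring
    rw [this, ZMod.val_natCast, Nat.mod_eq_of_lt (by omega)]
    exact ht
  · intro i hi
    beta_reduce
    rw [ZMod.natCast_zmod_val]; ring
  · intro t ht
    rw [Finset.mem_coe, Finset.mem_range] at ht
    beta_reduce
    have : (a + ((t:ℕ):ZMod n) - a) = ((t:ℕ) : ZMod n) := by ring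
    rw [this, ZMod.val_natCast, Nat.mod_eq_of_lt (by omega)]

end Chord

section Laminar
variable {n : ℕ} [NeZero n]

lemma val_split (a c i : ZMod n) : (i - a).val = ((c-a).val + (i-c).val) % n := by
  have h : i - a = (c - a) + (i - c) := by ring
  rw [h, ZMod.val_add]

lemma ne_of_val_pos {u w : ZMod n} (h : 0 < (w - u).val) : u ≠ w := by
  rintro rfl; simp at h

lemma ne_of_vals {a u w : ZMod n} (h : (u-a).val ≠ (w-a).val) : u ≠ w := fun he => h (by rw [he])

lemma laminar {p q : Sym2 (ZMod n)} (hp2 : 2 ≤ chordLen p) (hpd : ¬IsDiameter p)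
    (hq2 : 2 ≤ chordLen q) (hqd : ¬IsDiameter q) (hcr : ¬ Crosses p q) :
    arcS p ⊆ arcS q ∨ arcS q ⊆ arcS p ∨ Disjoint (arcS p) (arcS q) := by
  obtain ⟨a, b, hp, hpl, hpa, hps⟩ := chord_canon hp2 hpd
  obtain ⟨c, d, hq, hql, hqa, hqs⟩ := chord_canon hq2 hqd
  set ℓ := (b-a).val with hℓ
  set m := (d-c).val with hm
  set x := (c-a).val with hx
  have hl2 : 2 ≤ ℓ := hpl ▸ hp2
  have hm2 : 2 ≤ m := hql ▸ hq2
  have h2l : 2*ℓ < n := by omega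
  have h2m : 2*m < n := by omega
  have hxn : x < n := ZMod.val_lt _
  have hmemp : ∀ i : ZMod n, i ∈ arcS p ↔ (i-a).val < ℓ := fun i => by
    rw [hp]; exact mem_arcS_iff hpa i
  have hmemq : ∀ i : ZMod n, i ∈ arcS q ↔ (i-c).val < m := fun i => by
    rw [hq]; exact mem_arcS_iff hqa i
  rcases lt_or_ge x ℓ with hxl | hxl
  · rcases le_or_gt (x+m) ℓ with h1 | h1
    · -- S q ⊆ S p
      right; left
      intro i hi
      rw [hmemq] at hi
      rw [hmemp, val_split a c i, ← hx, Nat.mod_eq_of_lt (by omega)]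
      omega
    · rcases Nat.eq_zero_or_pos x with hx0 | hx0
      · -- c = a, m > ℓ : S p ⊆ S q
        left
        have hca : c = a := by
          have : c - a = 0 := by
            have := ZMod.val_eq_zero (c-a); rw [← hx] at this; exact this.1 hx0
          linear_combination this
        intro i hi
        rw [hmemp] at hi
        rw [hmemq, hca]
        omega
      · -- crossing
        exfalso; apply hcr
        have hy : (d-a).val = x + m := by
          rw [val_split a c d, ← hx, ← hm, Nat.mod_eq_of_lt (by omega)]
        refine ⟨a, b, c, d, hp, hq, ?_, ?_, ?_, ?_, ?_, ?_, ?_⟩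
        · exact ne_of_val_pos (by omega)
        · exact ne_of_val_pos (by omega)
        · exact ne_of_val_pos (by omega)
        · exact ne_of_vals (a := a) (u := b) (w := c) (by omega)
        · exact ne_of_vals (a := a) (u := b) (w := d) (by omega)
        · exact ne_of_val_pos (by omega)
        · left
          constructor
          · exact ⟨hx0, hxl⟩
          · intro h
            rw [InArc, hy] at h
            omega
  · rcases le_or_gt (x+m) n with h3 | h3
    · -- disjoint
      right; right
      rw [Finset.disjoint_left]
      intro i hip hiq
      rw [hmemp] at hip
      rw [hmemq] at hiq
      rw [val_split a c i, ← hx, Nat.mod_eq_of_lt (by omega)] at hip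
      omega
    · have hac : a ≠ c := ne_of_val_pos (by omega)
      have hnx : (a-c).val = n - x := by
        have := sum_val_sub (Ne.symm hac); rw [← hx] at this; omega
      rcases le_or_gt ℓ (x+m-n) with h4 | h4
      · -- S p ⊆ S q
        left
        intro i hi
        rw [hmemp] at hi
        rw [hmemq, val_split c a i, hnx, Nat.mod_eq_of_lt (by omega)]
        omega
      · -- crossing
        exfalso; apply hcr
        have hy : (d-a).val = x + m - n := by
          rw [val_split a c d, ← hx, ← hm]
          have h5 : x + m - n < n := by omega
          rw [show x + m = (x + m - n) + n by omega, Nat.add_mod_right,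
            Nat.mod_eq_of_lt h5]
          omega
        have hxl2 : ℓ + 2 ≤ x := by omega
        refine ⟨a, b, c, d, hp, hq, ?_, ?_, ?_, ?_, ?_, ?_, ?_⟩
        · exact ne_of_val_pos (by omega)
        · exact ne_of_val_pos (by omega)
        · exact ne_of_val_pos (by omega)
        · exact ne_of_vals (a := a) (u := b) (w := c) (by omega)
        · exact ne_of_vals (a := a) (u := b) (w := d) (by omega)
        · exact ne_of_val_pos (by omega)
        · right
          constructor
          · refine ⟨by omega, by omega⟩
          · intro h
            rw [InArc, ← hx] at h
            omega

end Laminar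

section Diam
variable {n : ℕ} [NeZero n]

lemma arcS_nonempty {q : Sym2 (ZMod n)} (h2 : 2 ≤ chordLen q) (hd : ¬IsDiameter q) :
    2 ≤ (arcS q).card ∧ 2 * (arcS q).card < n := by
  obtain ⟨a, b, hp, hpl, hpa, hps⟩ := chord_canon h2 hd
  rw [hp, card_arcS hpa]
  omega

lemma arcS_inj {p q : Sym2 (ZMod n)} (hp2 : 2 ≤ chordLen p) (hpd : ¬IsDiameter p)
    (hq2 : 2 ≤ chordLen q) (hqd : ¬IsDiameter q) (he : arcS p = arcS q) : p = q := by
  obtain ⟨a, b, hp, hpl, hpa, hps⟩ := chord_canon hp2 hpd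
  obtain ⟨c, d, hq, hql, hqa, hqs⟩ := chord_canon hq2 hqd
  have h2l : 2 * (b-a).val < n := by omega
  have h2m : 2 * (d-c).val < n := by omega
  have hac : a ∈ arcS s(c,d) := by
    rw [← hq, ← he, hp, mem_arcS_iff hpa]
    rw [sub_self, ZMod.val_zero]; omega
  have hca : c ∈ arcS s(a,b) := by
    rw [← hp, he, hq, mem_arcS_iff hqa]
    rw [sub_self, ZMod.val_zero]; omega
  rw [mem_arcS_iff hqa] at hac
  rw [mem_arcS_iff hpa] at hca
  have haceq : a = c := by
    by_contra hne
    have := sum_val_sub hne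
    omega
  subst haceq
  have hcard : (b-a).val = (d-a).val := by
    have h1 := card_arcS hpa
    have h2 := card_arcS hqa
    rw [← hp, he, hq] at h1
    omega
  have : b - a = d - a := ZMod.val_injective n hcard
  have hbd : b = d := by linear_combination this
  rw [hp, hq, hbd]

lemma arcS_diam {q : Sym2 (ZMod n)} (hd : IsDiameter q) : arcS q = ∅ := by
  induction q using Sym2.inductionOn with
  | hf x y =>
    ext i
    simp only [arcS, Finset.mem_filter, Finset.mem_univ, true_and, Finset.notMem_empty,
      iff_false]
    rintro ⟨a, b, he, h1, h2⟩
    have hd' : 2 * min (y-x).val (x-y).val = n := hd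
    rcases Sym2.eq_iff.1 he.symm with ⟨rfl, rfl⟩ | ⟨rfl, rfl⟩
    · rcases eq_or_ne a b with rfl | hne
      · simp at h1
      · have := sum_val_sub hne
        have := sum_val_sub hne.symm
        omega
    · rcases eq_or_ne a b with rfl | hne
      · simp at h1
      · have := sum_val_sub hne
        omega

lemma diam_canon {q : Sym2 (ZMod n)} (h2 : 2 ≤ chordLen q) (hd : IsDiameter q) :
    ∃ a b : ZMod n, q = s(a,b) ∧ (b-a).val = n/2 ∧ (a-b).val = n/2 ∧ n = 2*(n/2) := by
  induction q using Sym2.inductionOn with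
  | hf x y =>
    have hd' : 2 * min (y-x).val (x-y).val = n := hd
    have hxy : x ≠ y := by
      rintro rfl; rw [chordLen_mk] at h2; simp at h2
    have hsum := sum_val_sub (Ne.symm hxy)
    exact ⟨x, y, rfl, by omega, by omega, by omega⟩

/-- Two distinct diameters cross. -/
lemma diam_unique {p q : Sym2 (ZMod n)} (hp2 : 2 ≤ chordLen p) (hpd : IsDiameter p)
    (hq2 : 2 ≤ chordLen q) (hqd : IsDiameter q) (hcr : ¬ Crosses p q) : p = q := by
  obtain ⟨a, b, hp, hb1, hb2, hev⟩ := diam_canon hp2 hpd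
  obtain ⟨c, d, hq, hd1, hd2, _⟩ := diam_canon hq2 hqd
  set h := n/2 with hh
  have hh2 : 2 ≤ h := by
    have : chordLen p = min (b-a).val (a-b).val := by rw [hp, chordLen_mk]
    omega
  set x := (c-a).val with hx
  have hxn : x < n := ZMod.val_lt _
  have hdc : d - c = b - a := ZMod.val_injective n (by omega)
  rcases eq_or_ne x 0 with hx0 | hx0
  · have hca : c = a := by
      have : c - a = 0 := by
        have := ZMod.val_eq_zero (c-a); rw [← hx] at this; exact this.1 hx0
      linear_combination this
    subst hca
    have hdb : d = b := by linear_combination hdc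
    rw [hp, hq, hdb]
  · rcases eq_or_ne x h with hxh | hxh
    · -- c = b, d = a
      have hcb : c = b := by
        have : (c - a).val = (b-a).val := by omega
        exact (eq_of_val_sub_eq this)
      have hda : d = a := by
        have hba : b - a + (b - a) = 0 := by
          have hnn : ((b-a).val + (b-a).val : ℕ) = n := by omega
          calc b - a + (b - a) = (((b-a).val + (b-a).val : ℕ) : ZMod n) := by
                push_cast [ZMod.natCast_zmod_val]; ring
            _ = 0 := by rw [hnn]; exact ZMod.natCast_self n
        have h1 : d = b + (b - a) := by rw [hcb] at hdc; linear_combination hdc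
        rw [h1]
        have h2 : b + (b - a) - a = 0 := by
          calc b + (b-a) - a = (b - a) + (b - a) := by ring
            _ = 0 := hba
        linear_combination h2
      rw [hp, hq, hcb, hda, Sym2.eq_swap]
    · exfalso; apply hcr
      have hy : (d - a).val = (x + h) % n := by rw [val_split a c d, ← hx, hd1]
      rcases lt_or_ge x h with hlt | hle
      · have hyv : (d-a).val = x + h := by rw [hy, Nat.mod_eq_of_lt (by omega)]
        refine ⟨a, b, c, d, hp, hq, ne_of_val_pos (by omega), ne_of_val_pos (by omega),
          ne_of_val_pos (by omega), ne_of_vals (a:=a) (u:=b) (w:=c) (by omega),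
          ne_of_vals (a:=a) (u:=b) (w:=d) (by omega), ne_of_val_pos (by omega), ?_⟩
        left
        refine ⟨⟨by omega, by omega⟩, ?_⟩
        intro hin
        have h2 := hin.2
        omega
      · have hyv : (d-a).val = x + h - n := by
          rw [hy, show x + h = (x + h - n) + n by omega, Nat.add_mod_right,
            Nat.mod_eq_of_lt (by omega)]
          omega
        refine ⟨a, b, c, d, hp, hq, ne_of_val_pos (by omega), ne_of_val_pos (by omega),
          ne_of_val_pos (by omega), ne_of_vals (a:=a) (u:=b) (w:=c) (by omega),
          ne_of_vals (a:=a) (u:=b) (w:=d) (by omega), ne_of_val_pos (by omega), ?_⟩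
        right
        refine ⟨⟨by omega, by omega⟩, ?_⟩
        intro hin
        have h2 := hin.2
        omega

end Diam

section Sides
variable {n : ℕ} [NeZero n]

lemma card_interval (a : ZMod n) (ℓ : ℕ) (hl : ℓ ≤ n) :
    (Finset.univ.filter (fun i : ZMod n => (i - a).val < ℓ)).card = ℓ := by
  have hnz : 0 < n := Nat.pos_of_ne_zero (NeZero.ne n)
  have key : (Finset.univ.filter (fun i : ZMod n => (i - a).val < ℓ)).card =
      (Finset.range ℓ).card := by
    apply Finset.card_nbij' (fun i => (i - a).val) (fun t => a + ((t : ℕ) : ZMod n))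
    · intro i hi
      rw [Finset.mem_coe, Finset.mem_filter] at hi
      exact Finset.mem_range.2 hi.2
    · intro t ht
      rw [Finset.mem_coe, Finset.mem_range] at ht
      beta_reduce
      rw [Finset.mem_coe, Finset.mem_filter]
      have he : (a + ((t:ℕ):ZMod n) - a) = ((t:ℕ) : ZMod n) := by ring
      rw [he, ZMod.val_natCast]
      exact ⟨Finset.mem_univ _, lt_of_le_of_lt (Nat.mod_le _ _) ht⟩
    · intro i hi
      beta_reduce
      rw [ZMod.natCast_zmod_val]; ring
    · intro t ht
      rw [Finset.mem_coe, Finset.mem_range] at ht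
      beta_reduce
      have he : (a + ((t:ℕ):ZMod n) - a) = ((t:ℕ) : ZMod n) := by ring
      rw [he, ZMod.val_natCast]
      exact Nat.mod_eq_of_lt (by omega)
  rw [key, Finset.card_range]

/-- A non-diameter chord lies entirely on one side of a diameter it does not cross. -/
lemma side_of_diam {p q : Sym2 (ZMod n)} (hp2 : 2 ≤ chordLen p) (hpd : IsDiameter p)
    (hq2 : 2 ≤ chordLen q) (hqd : ¬ IsDiameter q) (hcr : ¬ Crosses p q)
    {a b : ZMod n} (hp : p = s(a,b)) (hb1 : (b-a).val = n/2) :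
    (∀ i ∈ arcS q, (i - a).val < n/2) ∨ (∀ i ∈ arcS q, n/2 ≤ (i - a).val) := by
  obtain ⟨a', b', hp', hb1', hb2', hev⟩ := diam_canon hp2 hpd
  obtain ⟨c, d, hq', hql, hqa, hqs⟩ := chord_canon hq2 hqd
  set h := n/2 with hh
  have hh2 : 2 ≤ h := by
    have : chordLen p = min (b-a).val (a-b).val := by rw [hp, chordLen_mk]
    have := hp2
    omega
  set m := (d-c).val with hm
  have hm2 : 2 ≤ m := hql ▸ hq2
  have h2m : 2*m < n := by omega
  set x := (c-a).val with hx
  have hxn : x < n := ZMod.val_lt _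
  have hmemq : ∀ i : ZMod n, i ∈ arcS q ↔ (i-c).val < m := fun i => by
    rw [hq']; exact mem_arcS_iff hqa i
  have hvali : ∀ i : ZMod n, i ∈ arcS q → (i - a).val = (x + (i-c).val) % n := by
    intro i _
    rw [val_split a c i, ← hx]
  -- case analysis
  rcases le_or_gt (x + m) h with h1 | h1
  · left
    intro i hi
    have hv := hvali i hi
    rw [hmemq] at hi
    rw [hv, Nat.mod_eq_of_lt (by omega)]
    omega
  · rcases le_or_gt h x with h2 | h2
    · rcases le_or_gt (x + m) n with h3 | h3
      · right
        intro i hi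
        have hv := hvali i hi
        rw [hmemq] at hi
        rw [hv, Nat.mod_eq_of_lt (by omega)]
        omega
      · -- wraps around 0 : crossing
        exfalso; apply hcr
        have hxl : h + 1 ≤ x := by omega
        have hyc : (c - a).val = x := hx.symm
        have hyd : (d - a).val = x + m - n := by
          rw [val_split a c d, ← hx, ← hm, show x + m = (x + m - n) + n by omega,
            Nat.add_mod_right, Nat.mod_eq_of_lt (by omega)]
          omega
        have hab : (b - a).val = h := hb1
        refine ⟨a, b, c, d, hp, hq', ne_of_val_pos (by omega), ne_of_val_pos (by omega),
          ne_of_val_pos (by omega), ne_of_vals (a:=a) (u:=b) (w:=c) (by omega),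
          ne_of_vals (a:=a) (u:=b) (w:=d) (by omega), ne_of_val_pos (by omega), ?_⟩
        right
        refine ⟨⟨by omega, by omega⟩, ?_⟩
        intro hin
        have h4 := hin.1
        have h5 := hin.2
        omega
    · -- 0 < x < h < x + m : crossing
      exfalso; apply hcr
      have hx1 : 1 ≤ x := by omega
      have hyc : (c - a).val = x := hx.symm
      have hyd : (d - a).val = x + m := by
        rw [val_split a c d, ← hx, ← hm, Nat.mod_eq_of_lt (by omega)]
      have hab : (b - a).val = h := hb1
      refine ⟨a, b, c, d, hp, hq', ne_of_val_pos (by omega), ne_of_val_pos (by omega),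
        ne_of_val_pos (by omega), ne_of_vals (a:=a) (u:=b) (w:=c) (by omega),
        ne_of_vals (a:=a) (u:=b) (w:=d) (by omega), ne_of_val_pos (by omega), ?_⟩
      left
      refine ⟨⟨by omega, by omega⟩, ?_⟩
      intro hin
      have h4 := hin.1
      have h5 := hin.2
      omega

end Sides

section Abstract
variable {n : ℕ} [NeZero n]

noncomputable def Wof (T' : Finset (Sym2 (ZMod n))) (E : Finset (ZMod n)) :
    Finset (Sym2 (ZMod n)) := T'.filter (fun q => arcS q ⊂ E)

noncomputable def Mxof (T' : Finset (Sym2 (ZMod n))) (E : Finset (ZMod n)) :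
    Finset (Sym2 (ZMod n)) :=
  (Wof T' E).filter (fun q => ∀ q' ∈ Wof T' E, ¬ arcS q ⊂ arcS q')

noncomputable def cntof (T' : Finset (Sym2 (ZMod n))) (E : Finset (ZMod n)) (i : ZMod n) : ℕ :=
  ((Wof T' E).filter (fun q => i ∈ arcS q)).card

noncomputable def uncof (T' : Finset (Sym2 (ZMod n))) (E : Finset (ZMod n)) :
    Finset (ZMod n) := E.filter (fun i => cntof T' E i = 0)

noncomputable def dfct (T' : Finset (Sym2 (ZMod n))) (q : Sym2 (ZMod n)) : ℕ :=
  (uncof T' (arcS q)).card + (Mxof T' (arcS q)).card - 2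

noncomputable def Dsum (T' : Finset (Sym2 (ZMod n))) (E : Finset (ZMod n)) : ℕ :=
  ∑ q ∈ Wof T' E, dfct T' q

variable {T' : Finset (Sym2 (ZMod n))}
  (Hlam : ∀ p ∈ T', ∀ q ∈ T',
    arcS p ⊆ arcS q ∨ arcS q ⊆ arcS p ∨ Disjoint (arcS p) (arcS q))
  (Hinj : ∀ p ∈ T', ∀ q ∈ T', arcS p = arcS q → p = q)
  (Hc2 : ∀ q ∈ T', 2 ≤ (arcS q).card)

lemma mem_Wof {E : Finset (ZMod n)} {q : Sym2 (ZMod n)} :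
    q ∈ Wof T' E ↔ q ∈ T' ∧ arcS q ⊂ E := Finset.mem_filter

include Hlam Hinj in
lemma exists_max {E : Finset (ZMod n)} {q : Sym2 (ZMod n)} (hq : q ∈ Wof T' E) :
    ∃ m ∈ Mxof T' E, arcS q ⊆ arcS m := by
  classical
  set F := (Wof T' E).filter (fun q' => arcS q ⊆ arcS q') with hF
  have hne : F.Nonempty := ⟨q, by simp [hF, hq]⟩
  obtain ⟨m, hmF, hmax⟩ := F.exists_max_image (fun q' => (arcS q').card) hne
  rw [hF, Finset.mem_filter] at hmF
  refine ⟨m, ?_, hmF.2⟩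
  rw [Mxof, Finset.mem_filter]
  refine ⟨hmF.1, ?_⟩
  intro q' hq' hss
  have hq'F : q' ∈ F := by
    rw [hF, Finset.mem_filter]
    exact ⟨hq', hmF.2.trans hss.subset⟩
  have := hmax q' hq'F
  have := Finset.card_lt_card hss
  omega

include Hlam Hinj in
lemma max_disj {E : Finset (ZMod n)} {m₁ m₂ : Sym2 (ZMod n)} (h1 : m₁ ∈ Mxof T' E)
    (h2 : m₂ ∈ Mxof T' E) (hne : m₁ ≠ m₂) : Disjoint (arcS m₁) (arcS m₂) := by
  rw [Mxof, Finset.mem_filter] at h1 h2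
  have ht1 : m₁ ∈ T' := (mem_Wof.1 h1.1).1
  have ht2 : m₂ ∈ T' := (mem_Wof.1 h2.1).1
  rcases Hlam m₁ ht1 m₂ ht2 with h | h | h
  · rcases eq_or_ne (arcS m₁) (arcS m₂) with he | hne'
    · exact absurd (Hinj _ ht1 _ ht2 he) hne
    · exact absurd (h1.2 m₂ h2.1) (by simp [Finset.ssubset_iff_subset_ne.2 ⟨h, hne'⟩])
  · rcases eq_or_ne (arcS m₂) (arcS m₁) with he | hne'
    · exact absurd (Hinj _ ht2 _ ht1 he) hne.symm
    · exact absurd (h2.2 m₁ h1.1) (by simp [Finset.ssubset_iff_subset_ne.2 ⟨h, hne'⟩])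
  · exact h

include Hlam Hinj in
lemma covered_eq_biUnion {E : Finset (ZMod n)} :
    E.filter (fun i => cntof T' E i ≠ 0) = (Mxof T' E).biUnion (fun m => arcS m) := by
  ext i
  rw [Finset.mem_filter, Finset.mem_biUnion]
  constructor
  · rintro ⟨hiE, hc⟩
    have : ((Wof T' E).filter (fun q => i ∈ arcS q)).Nonempty := by
      rw [← Finset.card_pos]
      rcases Nat.eq_zero_or_pos (cntof T' E i) with h | h
      · exact absurd h hc
      · exact h
    obtain ⟨q, hq⟩ := this
    rw [Finset.mem_filter] at hq
    obtain ⟨m, hm, hsub⟩ := exists_max Hlam Hinj hq.1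
    exact ⟨m, hm, hsub hq.2⟩
  · rintro ⟨m, hm, hin⟩
    have hmW : m ∈ Wof T' E := (Finset.mem_filter.1 hm).1
    have hsub : arcS m ⊂ E := (mem_Wof.1 hmW).2
    refine ⟨hsub.subset hin, ?_⟩
    have : m ∈ (Wof T' E).filter (fun q => i ∈ arcS q) := by
      rw [Finset.mem_filter]; exact ⟨hmW, hin⟩
    rw [cntof]
    have := Finset.card_pos.2 ⟨m, this⟩
    omega

include Hlam Hinj in
lemma card_partition {E : Finset (ZMod n)} :
    (uncof T' E).card + ∑ m ∈ Mxof T' E, (arcS m).card = E.card := by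
  have h1 : (uncof T' E).card + (E.filter (fun i => cntof T' E i ≠ 0)).card = E.card := by
    rw [uncof]
    exact Finset.card_filter_add_card_filter_not _
  rw [covered_eq_biUnion Hlam Hinj] at h1
  rw [← h1, Finset.card_biUnion]
  intro m₁ h1 m₂ h2 hne
  exact max_disj Hlam Hinj h1 h2 hne

include Hlam Hinj Hc2 in
lemma unc_mx_ge_two {E : Finset (ZMod n)} (hE : 2 ≤ E.card)
    (hstrict : ∀ m ∈ Mxof T' E, (arcS m).card < E.card) :
    2 ≤ (uncof T' E).card + (Mxof T' E).card := by
  have hp := card_partition (T' := T') Hlam Hinj (E := E)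
  rcases Nat.lt_or_ge (Mxof T' E).card 2 with hr | hr
  · interval_cases h : (Mxof T' E).card
    · rw [Finset.card_eq_zero.1 h] at hp
      simp at hp
      omega
    · obtain ⟨m, hm⟩ := Finset.card_eq_one.1 h
      rw [hm, Finset.sum_singleton] at hp
      have := hstrict m (by rw [hm]; exact Finset.mem_singleton_self m)
      omega
  · omega

include Hlam Hinj Hc2 in
lemma W_partition {E : Finset (ZMod n)} (f : Sym2 (ZMod n) → ℕ) :
    ∑ q ∈ Wof T' E, f q =
      ∑ m ∈ Mxof T' E, f m + ∑ m ∈ Mxof T' E, ∑ q ∈ Wof T' (arcS m), f q := by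
  classical
  have hset : Wof T' E = Mxof T' E ∪ (Mxof T' E).biUnion (fun m => Wof T' (arcS m)) := by
    ext q
    constructor
    · intro hq
      rw [Finset.mem_union, Finset.mem_biUnion]
      by_cases hqm : q ∈ Mxof T' E
      · exact Or.inl hqm
      · obtain ⟨m, hm, hsub⟩ := exists_max Hlam Hinj hq
        right
        refine ⟨m, hm, ?_⟩
        rw [mem_Wof]
        refine ⟨(mem_Wof.1 hq).1, ?_⟩
        rcases eq_or_ne (arcS q) (arcS m) with he | hne
        · exfalso
          have : q = m := Hinj _ (mem_Wof.1 hq).1 _ (mem_Wof.1 (Finset.mem_filter.1 hm).1).1 he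
          rw [this] at hqm
          exact hqm hm
        · exact Finset.ssubset_iff_subset_ne.2 ⟨hsub, hne⟩
    · intro hq
      rw [Finset.mem_union, Finset.mem_biUnion] at hq
      rcases hq with hq | ⟨m, hm, hq⟩
      · exact (Finset.mem_filter.1 hq).1
      · rw [mem_Wof] at hq ⊢
        refine ⟨hq.1, hq.2.trans (mem_Wof.1 (Finset.mem_filter.1 hm).1).2⟩
  have hdisj : Disjoint (Mxof T' E) ((Mxof T' E).biUnion (fun m => Wof T' (arcS m))) := by
    rw [Finset.disjoint_left]
    intro q hq hq'
    rw [Finset.mem_biUnion] at hq'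
    obtain ⟨m, hm, hqm⟩ := hq'
    exact (Finset.mem_filter.1 hq).2 m (Finset.mem_filter.1 hm).1 (mem_Wof.1 hqm).2
  rw [hset, Finset.sum_union hdisj, Finset.sum_biUnion]
  intro m₁ h1 m₂ h2 hne
  have h1 : m₁ ∈ Mxof T' E := h1
  have h2 : m₂ ∈ Mxof T' E := h2
  show Disjoint (Wof T' (arcS m₁)) (Wof T' (arcS m₂))
  rw [Finset.disjoint_left]
  intro q hq1 hq2
  have hd := max_disj Hlam Hinj h1 h2 hne
  have hq1' := (mem_Wof.1 hq1).2.subset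
  have hq2' := (mem_Wof.1 hq2).2.subset
  have hqc : 2 ≤ (arcS q).card := Hc2 _ (mem_Wof.1 hq1).1
  have hpos : 0 < (arcS q).card := by omega
  obtain ⟨i, hi⟩ := Finset.card_pos.1 hpos
  exact Finset.disjoint_left.1 hd (hq1' hi) (hq2' hi)

end Abstract

section Counting
variable {n : ℕ} [NeZero n] {T' : Finset (Sym2 (ZMod n))}
  (Hlam : ∀ p ∈ T', ∀ q ∈ T',
    arcS p ⊆ arcS q ∨ arcS q ⊆ arcS p ∨ Disjoint (arcS p) (arcS q))
  (Hinj : ∀ p ∈ T', ∀ q ∈ T', arcS p = arcS q → p = q)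
  (Hc2 : ∀ q ∈ T', 2 ≤ (arcS q).card)

lemma arc_ssub_of_mem_Mx {E : Finset (ZMod n)} {m : Sym2 (ZMod n)} (hm : m ∈ Mxof T' E) :
    arcS m ⊂ E := (mem_Wof.1 (Finset.mem_filter.1 hm).1).2

lemma mem_T'_of_mem_Mx {E : Finset (ZMod n)} {m : Sym2 (ZMod n)} (hm : m ∈ Mxof T' E) :
    m ∈ T' := (mem_Wof.1 (Finset.mem_filter.1 hm).1).1

include Hlam Hinj Hc2 in
lemma Wcard_partition {E : Finset (ZMod n)} :
    (Wof T' E).card = (Mxof T' E).card + ∑ m ∈ Mxof T' E, (Wof T' (arcS m)).card := by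
  have h1 := W_partition Hlam Hinj Hc2 (E := E) (fun _ => 1)
  calc (Wof T' E).card = ∑ q ∈ Wof T' E, 1 := Finset.card_eq_sum_ones _
    _ = ∑ m ∈ Mxof T' E, 1 + ∑ m ∈ Mxof T' E, ∑ q ∈ Wof T' (arcS m), 1 := h1
    _ = (Mxof T' E).card + ∑ m ∈ Mxof T' E, (Wof T' (arcS m)).card := by
        rw [← Finset.card_eq_sum_ones]
        congr 1
        exact Finset.sum_congr rfl fun m _ => (Finset.card_eq_sum_ones _).symm

include Hlam Hinj Hc2 in
lemma core_count : ∀ k, ∀ E : Finset (ZMod n), E.card ≤ k →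
    (Wof T' E).card + Dsum T' E + (uncof T' E).card + (Mxof T' E).card ≤ E.card := by
  intro k
  induction k with
  | zero =>
    intro E hE
    have hEe : E = ∅ := Finset.card_eq_zero.1 (by omega)
    subst hEe
    have hW : Wof T' ∅ = ∅ := by
      rw [Wof, Finset.filter_eq_empty_iff]
      intro q _ hq
      exact (Finset.not_ssubset_empty _) hq
    have hMx : Mxof T' ∅ = ∅ := by
      rw [Mxof, hW]; rfl
    have hunc : uncof T' ∅ = ∅ := by
      rw [uncof]; rfl
    rw [hW, hMx, hunc, Dsum, hW]
    simp
  | succ k ih =>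
    intro E hE
    have perm : ∀ m ∈ Mxof T' E,
        (Wof T' (arcS m)).card + Dsum T' (arcS m) + dfct T' m + 2 ≤ (arcS m).card := by
      intro m hm
      have hsub := arc_ssub_of_mem_Mx (T' := T') hm
      have hcard : (arcS m).card ≤ k := by
        have := Finset.card_lt_card hsub
        omega
      have hIH := ih (arcS m) hcard
      have hge2 : 2 ≤ (uncof T' (arcS m)).card + (Mxof T' (arcS m)).card := by
        apply unc_mx_ge_two Hlam Hinj Hc2 (Hc2 _ (mem_T'_of_mem_Mx hm))
        intro m' hm'
        exact Finset.card_lt_card (arc_ssub_of_mem_Mx (T' := T') hm')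
      rw [dfct]
      omega
    have key : ∑ m ∈ Mxof T' E, ((Wof T' (arcS m)).card + Dsum T' (arcS m) + dfct T' m + 2)
        ≤ ∑ m ∈ Mxof T' E, (arcS m).card := Finset.sum_le_sum perm
    have expand : ∑ m ∈ Mxof T' E,
        ((Wof T' (arcS m)).card + Dsum T' (arcS m) + dfct T' m + 2)
        = ∑ m ∈ Mxof T' E, (Wof T' (arcS m)).card + ∑ m ∈ Mxof T' E, Dsum T' (arcS m)
          + ∑ m ∈ Mxof T' E, dfct T' m + 2 * (Mxof T' E).card := by
      rw [Finset.sum_add_distrib, Finset.sum_add_distrib, Finset.sum_add_distrib,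
        Finset.sum_const, smul_eq_mul, mul_comm]
    have hWc := Wcard_partition Hlam Hinj Hc2 (E := E)
    have hDs : Dsum T' E = ∑ m ∈ Mxof T' E, dfct T' m
        + ∑ m ∈ Mxof T' E, Dsum T' (arcS m) := by
      rw [Dsum]
      exact W_partition Hlam Hinj Hc2 (E := E) (dfct T')
    have hpart := card_partition (T' := T') Hlam Hinj (E := E)
    omega

end Counting

section HF

def hF : ℕ → ℕ
  | 0 => 0
  | 1 => 2
  | (c+2) => max (2*(c+2)) (max ((c+2) + hF c) (2 * hF c))

lemma hF_succ2 (c : ℕ) : hF (c+2) = max (2*(c+2)) (max ((c+2) + hF c) (2 * hF c)) := rfl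

lemma hF_ge_two_mul (c : ℕ) : 2*c ≤ hF c := by
  match c with
  | 0 => simp [hF]
  | 1 => simp [hF]
  | (c+2) => rw [hF_succ2]; exact le_max_left _ _

lemma hF_ge_c_add (c : ℕ) : (c+2) + hF c ≤ hF (c+2) := by
  rw [hF_succ2]; exact le_trans (le_max_left _ _) (le_max_right _ _)

lemma hF_ge_double (c : ℕ) : 2 * hF c ≤ hF (c+2) := by
  rw [hF_succ2]; exact le_trans (le_max_right _ _) (le_max_right _ _)

lemma two_pow_aux (j : ℕ) : j + 1 ≤ 2^j := Nat.lt_two_pow_self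

lemma odd_aux (j : ℕ) : 2*j + 3 ≤ 3 * 2^j := by
  induction j with
  | zero => norm_num
  | succ j ih =>
    have : (0:ℕ) < 2^j := pow_pos (by norm_num) j
    rw [pow_succ]
    omega

lemma hF_even_le (J : ℕ) : hF (2*J+2) ≤ 2^(J+2) := by
  induction J with
  | zero => simp [hF_succ2, hF]
  | succ J ih =>
    have h1 : 2*(J+1)+2 = (2*J+2)+2 := by ring
    rw [h1, hF_succ2]
    have ha := two_pow_aux (J+1)
    have hp1 : (2:ℕ)^(J+1+2) = 2 * 2^(J+2) := by rw [pow_succ]; ring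
    have hp2 : (2:ℕ)^(J+2) = 2 * 2^(J+1) := by rw [pow_succ]; ring
    have hp0 : (0:ℕ) < 2^(J+1) := pow_pos (by norm_num) _
    simp only [max_le_iff]
    omega

lemma hF_odd_le (J : ℕ) : hF (2*J+1) ≤ 3 * 2^J := by
  induction J with
  | zero => simp [hF]
  | succ J ih =>
    have h1 : 2*(J+1)+1 = (2*J+1)+2 := by ring
    rw [h1, hF_succ2]
    have ha := odd_aux J
    have hp1 : (2:ℕ)^(J+1) = 2 * 2^J := by rw [pow_succ]; ring
    simp only [max_le_iff]
    omega

end HF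

section Phi
variable {n : ℕ} [NeZero n] {T' : Finset (Sym2 (ZMod n))}
  (Hlam : ∀ p ∈ T', ∀ q ∈ T',
    arcS p ⊆ arcS q ∨ arcS q ⊆ arcS p ∨ Disjoint (arcS p) (arcS q))
  (Hinj : ∀ p ∈ T', ∀ q ∈ T', arcS p = arcS q → p = q)
  (Hc2 : ∀ q ∈ T', 2 ≤ (arcS q).card)

include Hlam Hinj Hc2 in
lemma cnt_lower {E : Finset (ZMod n)} {m : Sym2 (ZMod n)} (hm : m ∈ Mxof T' E)
    {i : ZMod n} (hi : i ∈ arcS m) : cntof T' (arcS m) i + 1 ≤ cntof T' E i := by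
  have hmW : m ∈ Wof T' E := (Finset.mem_filter.1 hm).1
  have hsub : insert m ((Wof T' (arcS m)).filter (fun q => i ∈ arcS q)) ⊆
      (Wof T' E).filter (fun q => i ∈ arcS q) := by
    intro q hq
    rw [Finset.mem_insert] at hq
    rcases hq with rfl | hq
    · rw [Finset.mem_filter]; exact ⟨hmW, hi⟩
    · rw [Finset.mem_filter] at hq ⊢
      refine ⟨?_, hq.2⟩
      rw [mem_Wof] at hq ⊢
      exact ⟨hq.1.1, hq.1.2.trans (mem_Wof.1 hmW).2⟩
  have hnm : m ∉ (Wof T' (arcS m)).filter (fun q => i ∈ arcS q) := by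
    intro hmem
    rw [Finset.mem_filter, mem_Wof] at hmem
    exact (lt_irrefl _ hmem.1.2)
  have := Finset.card_le_card hsub
  rw [Finset.card_insert_of_notMem hnm] at this
  exact this

include Hlam Hinj Hc2 in
lemma phi_step {E : Finset (ZMod n)} (c : ℕ)
    (Hrec : ∀ m ∈ Mxof T' E,
      ∑ i ∈ arcS m, (c - 2 - 2 * cntof T' (arcS m) i) ≤ hF (c-2)) :
    ∑ i ∈ E, (c - 2 * cntof T' E i) ≤
      (uncof T' E).card * c + (Mxof T' E).card * hF (c-2) := by
  classical
  have hsplit : ∑ i ∈ E, (c - 2 * cntof T' E i) =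
      ∑ i ∈ uncof T' E, (c - 2 * cntof T' E i)
        + ∑ i ∈ E.filter (fun i => ¬ (cntof T' E i = 0)), (c - 2 * cntof T' E i) := by
    rw [uncof]
    exact (Finset.sum_filter_add_sum_filter_not E _ _).symm
  rw [hsplit]
  have h1 : ∑ i ∈ uncof T' E, (c - 2 * cntof T' E i) ≤ (uncof T' E).card * c := by
    apply le_trans (Finset.sum_le_sum (fun i _ => Nat.sub_le c _))
    rw [Finset.sum_const, smul_eq_mul]
  have h2 : ∑ i ∈ E.filter (fun i => ¬ (cntof T' E i = 0)), (c - 2 * cntof T' E i)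
      ≤ (Mxof T' E).card * hF (c-2) := by
    have hcov : E.filter (fun i => ¬ (cntof T' E i = 0)) =
        (Mxof T' E).biUnion (fun m => arcS m) := covered_eq_biUnion Hlam Hinj
    rw [hcov]
    rw [Finset.sum_biUnion (fun m₁ h1 m₂ h2 hne => max_disj Hlam Hinj h1 h2 hne)]
    have h3 : ∀ m ∈ Mxof T' E,
        ∑ i ∈ arcS m, (c - 2 * cntof T' E i) ≤ hF (c-2) := by
      intro m hm
      refine le_trans (Finset.sum_le_sum (fun i hi => ?_)) (Hrec m hm)
      have := cnt_lower Hlam Hinj Hc2 hm hi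
      omega
    apply le_trans (Finset.sum_le_sum h3)
    rw [Finset.sum_const, smul_eq_mul]
  omega

include Hlam Hinj Hc2 in
lemma phi : ∀ k (E : Finset (ZMod n)), E.card ≤ k →
    (∀ q ∈ Wof T' E, (uncof T' (arcS q)).card + (Mxof T' (arcS q)).card ≤ 2) →
    (uncof T' E).card + (Mxof T' E).card ≤ 2 →
    ∀ c, ∑ i ∈ E, (c - 2 * cntof T' E i) ≤ hF c := by
  intro k
  induction k with
  | zero =>
    intro E hE _ _ c
    have hEe : E = ∅ := Finset.card_eq_zero.1 (by omega)
    subst hEe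
    simp
  | succ k ih =>
    intro E hE Hall HE c
    have step := phi_step Hlam Hinj Hc2 (E := E) c (fun m hm => by
      have hsub := arc_ssub_of_mem_Mx (T' := T') hm
      have hcard : (arcS m).card ≤ k := by
        have h1 := Finset.card_lt_card hsub
        have h2 := Finset.card_le_card hsub.subset
        omega
      apply ih (arcS m) hcard
      · intro q hq
        apply Hall
        rw [mem_Wof] at hq ⊢
        exact ⟨hq.1, hq.2.trans hsub⟩
      · exact Hall m (Finset.mem_filter.1 hm).1)
    apply le_trans step
    set u := (uncof T' E).card
    set r := (Mxof T' E).card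
    rcases le_or_gt 2 c with hc | hc
    · obtain ⟨c', rfl⟩ : ∃ c', c = c' + 2 := ⟨c - 2, by omega⟩
      have f1 := hF_ge_two_mul (c'+2)
      have f2 := hF_ge_c_add c'
      have f3 := hF_ge_double c'
      have hc' : c' + 2 - 2 = c' := by omega
      rw [hc']
      have hu : u ≤ 2 := by omega
      have hr : r ≤ 2 := by omega
      interval_cases u <;> interval_cases r <;> omega
    · have f1 := hF_ge_two_mul 1
      interval_cases c <;>
        simp only [show hF 0 = 0 from rfl, show hF 1 = 2 from rfl,
          show (0:ℕ)-2 = 0 from rfl, show (1:ℕ)-2 = 0 from rfl, Nat.mul_zero,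
          Nat.zero_add, Nat.add_zero, Nat.mul_one] <;>
        omega

end Phi

section Final
variable {n : ℕ} [NeZero n]

lemma mem_arcS_iff_layers {q : Sym2 (ZMod n)} {i : ZMod n} :
    i ∈ arcS q ↔ LayersEdge q i := by
  rw [arcS, Finset.mem_filter]
  simp

theorem master_bound (k n : ℕ) [NeZero n] (hn3 : 3 ≤ n) (T : Finset (Sym2 (ZMod n)))
    (hT : IsTriangulation n T) :
    ∑ i : ZMod n, ((2*k+4) - mT n T i) ≤ 3 * 2^(k+2) := by
  classical
  obtain ⟨hcard, hlen, hcross⟩ := hT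
  have hcardn : (Finset.univ : Finset (ZMod n)).card = n := by
    rw [Finset.card_univ, ZMod.card]
  have hpow : (2:ℕ)^(k+2) = 2*2^(k+1) := by rw [pow_succ]; ring
  have hpow1 : (2:ℕ)^(k+1) = 2*2^k := by rw [pow_succ]; ring
  have htp := two_pow_aux (k+1)
  -- trivial case n = 3
  rcases eq_or_lt_of_le hn3 with h3 | hn4
  · have hTe : T = ∅ := Finset.card_eq_zero.1 (by omega)
    subst hTe
    have hmT : ∀ i : ZMod n, mT n ∅ i = 0 := by
      intro i; rw [mT]; simp
    calc ∑ i : ZMod n, ((2*k+4) - mT n ∅ i) = ∑ i : ZMod n, (2*k+4) := by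
          apply Finset.sum_congr rfl; intro i _; rw [hmT i]; omega
      _ = n * (2*k+4) := by rw [Finset.sum_const, smul_eq_mul, hcardn]
      _ ≤ 3 * 2^(k+2) := by rw [← h3]; omega
  -- main case n ≥ 4
  set T' := T.filter (fun q => ¬ IsDiameter q) with hT'
  set Td := T.filter (fun q => IsDiameter q) with hTd
  have memT' : ∀ q, q ∈ T' ↔ q ∈ T ∧ ¬ IsDiameter q := fun q => Finset.mem_filter
  have Hc2 : ∀ q ∈ T', 2 ≤ (arcS q).card :=
    fun q hq => (arcS_nonempty (hlen q ((memT' q).1 hq).1) ((memT' q).1 hq).2).1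
  have Hcn : ∀ q ∈ T', 2 * (arcS q).card < n :=
    fun q hq => (arcS_nonempty (hlen q ((memT' q).1 hq).1) ((memT' q).1 hq).2).2
  have Hinj : ∀ p ∈ T', ∀ q ∈ T', arcS p = arcS q → p = q := by
    intro p hp q hq he
    exact arcS_inj (hlen p ((memT' p).1 hp).1) ((memT' p).1 hp).2
      (hlen q ((memT' q).1 hq).1) ((memT' q).1 hq).2 he
  have Hlam : ∀ p ∈ T', ∀ q ∈ T',
      arcS p ⊆ arcS q ∨ arcS q ⊆ arcS p ∨ Disjoint (arcS p) (arcS q) := by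
    intro p hp q hq
    rcases eq_or_ne p q with rfl | hne
    · exact Or.inl (le_refl _)
    · exact laminar (hlen p ((memT' p).1 hp).1) ((memT' p).1 hp).2
        (hlen q ((memT' q).1 hq).1) ((memT' q).1 hq).2
        (hcross p ((memT' p).1 hp).1 q ((memT' q).1 hq).1 hne)
  have hmT_eq : ∀ i : ZMod n,
      mT n T i = 2 * (T'.filter (fun q => i ∈ arcS q)).card + Td.card := by
    intro i
    have hfe : T.filter (fun p => LayersEdge p i ∧ ¬IsDiameter p)
        = T'.filter (fun q => i ∈ arcS q) := by
      rw [hT', Finset.filter_filter]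
      ext q
      simp only [Finset.mem_filter, mem_arcS_iff_layers]
      tauto
    rw [mT, hfe, hTd]
  -- case split on diameters
  rcases Finset.eq_empty_or_nonempty Td with hTde | hTdne
  · -- no diameter
    have hT'T : T' = T := by
      rw [hT']
      apply Finset.filter_true_of_mem
      intro q hq
      rw [hTd, Finset.filter_eq_empty_iff] at hTde
      exact hTde hq
    have hWuniv : Wof T' Finset.univ = T' := by
      rw [Wof]
      apply Finset.filter_true_of_mem
      intro q hq
      rw [Finset.ssubset_univ_iff]
      intro he
      have h1 := Hcn q hq
      rw [he, hcardn] at h1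
      have h2 := Hc2 q hq
      rw [he, hcardn] at h2
      omega
    have hcnt : ∀ i, cntof T' Finset.univ i = (T'.filter (fun q => i ∈ arcS q)).card := by
      intro i; rw [cntof, hWuniv]
    have hcore := core_count Hlam Hinj Hc2 n Finset.univ (le_of_eq hcardn)
    rw [hWuniv] at hcore
    have hT'card : T'.card = n - 3 := by rw [hT'T, hcard]
    -- u + r ≥ 3 at top
    have hur3 : 3 ≤ (uncof T' Finset.univ).card + (Mxof T' Finset.univ).card := by
      have hpart := card_partition (T' := T') Hlam Hinj (E := Finset.univ)
      rw [hcardn] at hpart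
      have hbnd : ∑ m ∈ Mxof T' Finset.univ, (arcS m).card ≤
          (Mxof T' Finset.univ).card • ((n-1)/2) := by
        apply Finset.sum_le_card_nsmul
        intro m hm
        have := Hcn m (mem_T'_of_mem_Mx hm)
        omega
      rw [smul_eq_mul] at hbnd
      by_contra hcon
      push_neg at hcon
      have hr2 : (Mxof T' Finset.univ).card ≤ 2 := by omega
      interval_cases h : (Mxof T' Finset.univ).card <;> omega
    have hD0 : ∀ q ∈ T', dfct T' q = 0 := by
      have hDs : Dsum T' Finset.univ = 0 := by omega
      rw [Dsum, hWuniv] at hDs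
      exact fun q hq => (Finset.sum_eq_zero_iff.1 hDs) q hq
    -- apply phi_step at univ
    have hstep := phi_step Hlam Hinj Hc2 (E := Finset.univ) (2*k+4) ?hrec
    case hrec =>
      intro m hm
      have hsub := arc_ssub_of_mem_Mx (T' := T') hm
      apply phi Hlam Hinj Hc2 (arcS m).card (arcS m) (le_refl _)
      · intro q hq
        have hq' : q ∈ T' := (mem_Wof.1 hq).1
        have := hD0 q hq'
        rw [dfct] at this
        omega
      · have hmT' : m ∈ T' := mem_T'_of_mem_Mx hm
        have := hD0 m hmT'
        rw [dfct] at this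
        omega
    -- combine
    have hmaster : ∑ i : ZMod n, ((2*k+4) - mT n T i) =
        ∑ i : ZMod n, ((2*k+4) - 2 * cntof T' Finset.univ i) := by
      apply Finset.sum_congr rfl
      intro i _
      rw [hmT_eq i, hcnt i, hTde]
      simp
    rw [hmaster]
    apply le_trans hstep
    have hhf : hF (2*k+4-2) ≤ 2^(k+2) := by
      have h22 : 2*k+4-2 = 2*k+2 := by omega
      rw [h22]
      exact hF_even_le k
    have hC : 2*k+4 ≤ 2^(k+2) := by omega
    have hu := Nat.mul_le_mul_left (uncof T' Finset.univ).card hC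
    have hr := Nat.mul_le_mul_left (Mxof T' Finset.univ).card hhf
    have hur : (uncof T' Finset.univ).card + (Mxof T' Finset.univ).card ≤ 3 := by omega
    calc (uncof T' Finset.univ).card * (2*k+4) + (Mxof T' Finset.univ).card * hF (2*k+4-2)
        ≤ (uncof T' Finset.univ).card * 2^(k+2) + (Mxof T' Finset.univ).card * 2^(k+2) :=
          by omega
      _ = ((uncof T' Finset.univ).card + (Mxof T' Finset.univ).card) * 2^(k+2) := by ring
      _ ≤ 3 * 2^(k+2) := Nat.mul_le_mul_right _ hur
  · -- one diameter
    obtain ⟨d, hd⟩ := hTdne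
    have hdT : d ∈ T := (Finset.mem_filter.1 hd).1
    have hdD : IsDiameter d := (Finset.mem_filter.1 hd).2
    have hTdd : Td = {d} := by
      rw [Finset.eq_singleton_iff_unique_mem]
      refine ⟨hd, ?_⟩
      intro q hq
      have hqT : q ∈ T := (Finset.mem_filter.1 hq).1
      have hqD : IsDiameter q := (Finset.mem_filter.1 hq).2
      rcases eq_or_ne q d with h | hne
      · exact h
      · exact diam_unique (hlen q hqT) hqD (hlen d hdT) hdD (hcross q hqT d hdT hne)
    obtain ⟨a, b, hdab, hb1, hb2, hev⟩ := diam_canon (hlen d hdT) hdD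
    set hh := n/2 with hhdef
    have hh2 : 2 ≤ hh := by
      have h1 : chordLen d = min (b-a).val (a-b).val := by rw [hdab, chordLen_mk]
      have := hlen d hdT
      omega
    set S1 := Finset.univ.filter (fun i : ZMod n => (i - a).val < hh) with hS1
    set S2 := Finset.univ.filter (fun i : ZMod n => ¬ ((i - a).val < hh)) with hS2
    have hS1card : S1.card = hh := card_interval a hh (by omega)
    have hS2card : S2.card = hh := by
      have := Finset.card_filter_add_card_filter_not
        (s := (Finset.univ : Finset (ZMod n))) (p := fun i => (i - a).val < hh)
      rw [← hS1, ← hS2] at this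
      omega
    -- every non-diameter chord is inside one side
    have hside : ∀ q ∈ T', arcS q ⊂ S1 ∨ arcS q ⊂ S2 := by
      intro q hq
      have hqT : q ∈ T := ((memT' q).1 hq).1
      have hqD : ¬ IsDiameter q := ((memT' q).1 hq).2
      have hne : d ≠ q := by
        intro he; rw [← he] at hqD; exact hqD hdD
      have hcr : ¬ Crosses d q := hcross d hdT q hqT hne
      have hcq := Hcn q hq
      rcases side_of_diam (hlen d hdT) hdD (hlen q hqT) hqD hcr hdab hb1 with h | h
      · left
        rw [Finset.ssubset_iff_subset_ne]
        constructor
        · intro i hi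
          rw [hS1, Finset.mem_filter]
          exact ⟨Finset.mem_univ _, h i hi⟩
        · intro he
          have hlt : (arcS q).card < S1.card := by rw [hS1card]; omega
          rw [he] at hlt
          omega
      · right
        rw [Finset.ssubset_iff_subset_ne]
        constructor
        · intro i hi
          rw [hS2, Finset.mem_filter]
          exact ⟨Finset.mem_univ _, by have := h i hi; omega⟩
        · intro he
          have : (arcS q).card < S2.card := by rw [hS2card]; omega
          rw [he] at this
          omega
    have hside' : ∀ q ∈ T', (arcS q ⊂ S1 ∧ ¬ arcS q ⊂ S2) ∨ (arcS q ⊂ S2 ∧ ¬ arcS q ⊂ S1) := by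
      intro q hq
      have hdisj : Disjoint S1 S2 := by
        rw [hS1, hS2]
        exact Finset.disjoint_filter_filter_not _ _ _
      have hne : (arcS q).Nonempty := by
        have := Hc2 q hq
        rw [← Finset.card_pos]; omega
      obtain ⟨x, hx⟩ := hne
      rcases hside q hq with h | h
      · left
        refine ⟨h, fun h' => ?_⟩
        exact Finset.disjoint_left.1 hdisj (h.subset hx) (h'.subset hx)
      · right
        refine ⟨h, fun h' => ?_⟩
        exact Finset.disjoint_left.1 hdisj (h'.subset hx) (h.subset hx)
    -- partition of T'
    have hW1 : Wof T' S1 = T'.filter (fun q => arcS q ⊂ S1) := rfl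
    have hcards : (Wof T' S1).card + (Wof T' S2).card = T'.card := by
      rw [hW1]
      have h2 : Wof T' S2 = T'.filter (fun q => ¬ arcS q ⊂ S1) := by
        rw [Wof]
        apply Finset.filter_congr
        intro q hq
        rcases hside' q hq with ⟨h1, h2⟩ | ⟨h1, h2⟩
        · simp [h1, h2]
        · simp [h1, h2]
      rw [h2]
      exact Finset.card_filter_add_card_filter_not _
    have hT'card : T'.card = n - 4 := by
      have hsplitT := Finset.card_filter_add_card_filter_not
        (s := T) (p := fun q => IsDiameter q)
      have h1 : Td.card = 1 := by rw [hTdd]; rfl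
      have h2 : Td.card + T'.card = T.card := by rw [hTd, hT']; exact hsplitT
      omega
    -- core count on each side
    have hcore1 := core_count Hlam Hinj Hc2 hh S1 (le_of_eq hS1card)
    have hcore2 := core_count Hlam Hinj Hc2 hh S2 (le_of_eq hS2card)
    rw [hS1card] at hcore1
    rw [hS2card] at hcore2
    have hge1 : 2 ≤ (uncof T' S1).card + (Mxof T' S1).card := by
      apply unc_mx_ge_two Hlam Hinj Hc2 (by omega)
      intro m hm
      have := Finset.card_lt_card (arc_ssub_of_mem_Mx (T' := T') hm)
      omega
    have hge2 : 2 ≤ (uncof T' S2).card + (Mxof T' S2).card := by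
      apply unc_mx_ge_two Hlam Hinj Hc2 (by omega)
      intro m hm
      have := Finset.card_lt_card (arc_ssub_of_mem_Mx (T' := T') hm)
      omega
    have hnn : n = 2 * hh := hev
    have hD1 : Dsum T' S1 = 0 := by omega
    have hD2 : Dsum T' S2 = 0 := by omega
    have hur1 : (uncof T' S1).card + (Mxof T' S1).card ≤ 2 := by omega
    have hur2 : (uncof T' S2).card + (Mxof T' S2).card ≤ 2 := by omega
    have hdfct1 : ∀ q ∈ Wof T' S1, dfct T' q = 0 := by
      rw [Dsum] at hD1
      exact fun q hq => (Finset.sum_eq_zero_iff.1 hD1) q hq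
    have hdfct2 : ∀ q ∈ Wof T' S2, dfct T' q = 0 := by
      rw [Dsum] at hD2
      exact fun q hq => (Finset.sum_eq_zero_iff.1 hD2) q hq
    -- phi on each side
    have hphi1 := phi Hlam Hinj Hc2 hh S1 (le_of_eq hS1card)
      (fun q hq => by have := hdfct1 q hq; rw [dfct] at this; omega) hur1 (2*k+3)
    have hphi2 := phi Hlam Hinj Hc2 hh S2 (le_of_eq hS2card)
      (fun q hq => by have := hdfct2 q hq; rw [dfct] at this; omega) hur2 (2*k+3)
    -- pointwise bounds
    have hptS : ∀ (S : Finset (ZMod n)), Wof T' S ⊆ T' → ∀ i,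
        cntof T' S i ≤ (T'.filter (fun q => i ∈ arcS q)).card := by
      intro S hWS i
      rw [cntof]
      apply Finset.card_le_card
      intro q hq
      rw [Finset.mem_filter] at hq ⊢
      exact ⟨hWS hq.1, hq.2⟩
    have hWsub : ∀ S : Finset (ZMod n), Wof T' S ⊆ T' := by
      intro S q hq
      exact (mem_Wof.1 hq).1
    have hsplit : ∑ i : ZMod n, ((2*k+4) - mT n T i) =
        ∑ i ∈ S1, ((2*k+4) - mT n T i) + ∑ i ∈ S2, ((2*k+4) - mT n T i) := by
      rw [hS1, hS2]
      exact (Finset.sum_filter_add_sum_filter_not _ _ _).symm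
    rw [hsplit]
    have hbound1 : ∑ i ∈ S1, ((2*k+4) - mT n T i) ≤ hF (2*k+3) := by
      refine le_trans (Finset.sum_le_sum (fun i _ => ?_)) hphi1
      have h1 := hmT_eq i
      have h2 := hptS S1 (hWsub S1) i
      rw [hTdd, Finset.card_singleton] at h1
      omega
    have hbound2 : ∑ i ∈ S2, ((2*k+4) - mT n T i) ≤ hF (2*k+3) := by
      refine le_trans (Finset.sum_le_sum (fun i _ => ?_)) hphi2
      have h1 := hmT_eq i
      have h2 := hptS S2 (hWsub S2) i
      rw [hTdd, Finset.card_singleton] at h1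
      omega
    have hodd : hF (2*k+3) ≤ 3 * 2^(k+1) := by
      have : 2*k+3 = 2*(k+1)+1 := by omega
      rw [this]
      exact hF_odd_le (k+1)
    omega

end Final

section Final2
variable {n : ℕ} [NeZero n]

lemma card_arcS_chordLen {q : Sym2 (ZMod n)} (h2 : 2 ≤ chordLen q) (hd : ¬IsDiameter q) :
    (arcS q).card = chordLen q := by
  obtain ⟨a, b, hp, hpl, hpa, hps⟩ := chord_canon h2 hd
  rw [hp] at hpl ⊢
  rw [card_arcS hpa]
  exact hpl

theorem mT_sum (n : ℕ) [NeZero n] (T : Finset (Sym2 (ZMod n)))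
    (hT : IsTriangulation n T) : ∑ i : ZMod n, mT n T i = 2 * TCL n T := by
  classical
  obtain ⟨hcard, hlen, hcross⟩ := hT
  have hcardn : (Finset.univ : Finset (ZMod n)).card = n := by
    rw [Finset.card_univ, ZMod.card]
  set T' := T.filter (fun q => ¬ IsDiameter q) with hT'
  set Td := T.filter (fun q => IsDiameter q) with hTd
  have memT' : ∀ q, q ∈ T' ↔ q ∈ T ∧ ¬ IsDiameter q := fun q => Finset.mem_filter
  have hmT_eq : ∀ i : ZMod n,
      mT n T i = 2 * (T'.filter (fun q => i ∈ arcS q)).card + Td.card := by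
    intro i
    have hfe : T.filter (fun p => LayersEdge p i ∧ ¬IsDiameter p)
        = T'.filter (fun q => i ∈ arcS q) := by
      rw [hT', Finset.filter_filter]
      ext q
      simp only [Finset.mem_filter, mem_arcS_iff_layers]
      tauto
    rw [mT, hfe, hTd]
  have hsum1 : ∑ i : ZMod n, mT n T i =
      2 * (∑ i : ZMod n, (T'.filter (fun q => i ∈ arcS q)).card) + n * Td.card := by
    calc ∑ i : ZMod n, mT n T i
        = ∑ i : ZMod n, (2 * (T'.filter (fun q => i ∈ arcS q)).card + Td.card) :=
          Finset.sum_congr rfl (fun i _ => hmT_eq i)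
      _ = ∑ i : ZMod n, 2 * (T'.filter (fun q => i ∈ arcS q)).card
          + ∑ _i : ZMod n, Td.card := Finset.sum_add_distrib
      _ = 2 * (∑ i : ZMod n, (T'.filter (fun q => i ∈ arcS q)).card) + n * Td.card := by
          rw [Finset.mul_sum, Finset.sum_const, smul_eq_mul, hcardn]
  have hswap : ∑ i : ZMod n, (T'.filter (fun q => i ∈ arcS q)).card
      = ∑ q ∈ T', (arcS q).card := by
    have h1 : ∀ i : ZMod n, (T'.filter (fun q => i ∈ arcS q)).card
        = ∑ q ∈ T', (if i ∈ arcS q then 1 else 0) := by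
      intro i
      rw [Finset.card_filter]
    rw [Finset.sum_congr rfl (fun i _ => h1 i), Finset.sum_comm]
    apply Finset.sum_congr rfl
    intro q _
    rw [← Finset.card_filter]
    congr 1
    ext i
    simp
  have hchord : ∑ q ∈ T', (arcS q).card = ∑ q ∈ T', chordLen q := by
    apply Finset.sum_congr rfl
    intro q hq
    exact card_arcS_chordLen (hlen q ((memT' q).1 hq).1) ((memT' q).1 hq).2
  have hTCL : TCL n T = ∑ q ∈ Td, chordLen q + ∑ q ∈ T', chordLen q := by
    rw [TCL, hTd, hT']
    exact (Finset.sum_filter_add_sum_filter_not _ _ _).symm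
  rcases Finset.eq_empty_or_nonempty Td with hTde | hTdne
  · rw [hTde] at hsum1 hTCL
    simp only [Finset.card_empty, Nat.mul_zero, Nat.add_zero, Finset.sum_empty,
      Nat.zero_add] at hsum1 hTCL
    rw [hsum1, hswap, hchord, hTCL]
  · obtain ⟨d, hd⟩ := hTdne
    have hdT : d ∈ T := (Finset.mem_filter.1 hd).1
    have hdD : IsDiameter d := (Finset.mem_filter.1 hd).2
    have hTdd : Td = {d} := by
      rw [Finset.eq_singleton_iff_unique_mem]
      refine ⟨hd, ?_⟩
      intro q hq
      have hqT : q ∈ T := (Finset.mem_filter.1 hq).1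
      have hqD : IsDiameter q := (Finset.mem_filter.1 hq).2
      rcases eq_or_ne q d with h | hne
      · exact h
      · exact diam_unique (hlen q hqT) hqD (hlen d hdT) hdD (hcross q hqT d hdT hne)
    rw [hTdd] at hsum1 hTCL
    rw [Finset.card_singleton] at hsum1
    rw [Finset.sum_singleton] at hTCL
    have hn2 : n = 2 * chordLen d := hdD.symm
    rw [hsum1, hswap, hchord, hTCL]
    omega

end Final2


/-- For `k ≥ 0` and `3·2^k ≤ n ≤ 3·2^(k+1)`, every triangulation `T` of the
`n`-gon satisfies `TCL(T) ≥ n(k+2) - 3·2^(k+1)`. -/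
theorem min_TCL_lower_bound (k n : ℕ) (h1 : 3 * 2 ^ k ≤ n) (h2 : n ≤ 3 * 2 ^ (k + 1))
    (T : Finset (Sym2 (ZMod n))) (hT : IsTriangulation n T) :
    n * (k + 2) - 3 * 2 ^ (k + 1) ≤ TCL n T := by
  have hpk : 1 ≤ 2^k := Nat.one_le_two_pow
  have hn3 : 3 ≤ n := by omega
  haveI : NeZero n := ⟨by omega⟩
  have hm := master_bound k n hn3 T hT
  have hs := mT_sum n T hT
  have hcardn : (Finset.univ : Finset (ZMod n)).card = n := by
    rw [Finset.card_univ, ZMod.card]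
  have hsum2 : ∑ _i : ZMod n, (2*k+4 : ℕ) ≤
      ∑ i : ZMod n, (mT n T i + ((2*k+4) - mT n T i)) :=
    Finset.sum_le_sum (fun i _ => by omega)
  have hL : ∑ _i : ZMod n, (2*k+4 : ℕ) = n * (2*k+4) := by
    rw [Finset.sum_const, smul_eq_mul, hcardn]
  have hR : ∑ i : ZMod n, (mT n T i + ((2*k+4) - mT n T i))
      = 2 * TCL n T + ∑ i : ZMod n, ((2*k+4) - mT n T i) := by
    rw [Finset.sum_add_distrib, hs]
  rw [hL, hR] at hsum2
  have key : n * (2*k+4) ≤ 2 * TCL n T + 3 * 2^(k+2) :=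
    le_trans hsum2 (Nat.add_le_add_left hm _)
  have hring : n * (2*k+4) = 2 * (n * (k+2)) := by ring
  have hp2 : (2:ℕ)^(k+2) = 2 * 2^(k+1) := by rw [pow_succ]; ring
  rw [hring, hp2] at key
  omega
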